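/- arXiv:1401.7195 — 3 statements merged into one kernel-verified Lean document; each statement's English description precedes it below -/
import Mathlib

section
/- The function X ↦ ln det(I_N + (Y - H X)ᵀ C⁻¹ (Y - H X)) over n×N real matrices X attains its global minimum at X = (Hᵀ C⁻¹ H)⁻¹ Hᵀ C⁻¹ Y, when H has full column rank and C is symmetric positive definite. -/
open Matrix
open scoped MatrixOrder

private lemma one_le_det_one_add_psd {k : ℕ} {B : Matrix (Fin k) (Fin k) ℝ}
    (hB : B.PosSemidef) : 1 ≤ (1 + B).det := by
  have hspec := hB.1.spectral_theorem
  set U : Matrix (Fin k) (Fin k) ℝ := (Matrix.IsHermitian.eigenvectorUnitary hB.1 : Matrix (Fin k) (Fin k) ℝ) with hU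
  have hUU : U * star U = 1 := (Matrix.mem_unitaryGroup_iff).mp (Matrix.IsHermitian.eigenvectorUnitary hB.1).2
  set D : Matrix (Fin k) (Fin k) ℝ := Matrix.diagonal (RCLike.ofReal ∘ hB.1.eigenvalues) with hD
  have key : 1 + B = U * (1 + D) * star U := by
    rw [Matrix.mul_add, Matrix.add_mul, Matrix.mul_one, hUU]
    rw [hspec, Unitary.conjStarAlgAut_apply]
  rw [key, Matrix.det_mul, Matrix.det_mul]
  have hdet : U.det * (star U).det = 1 := by
    rw [← Matrix.det_mul, hUU, Matrix.det_one]
  calc (1:ℝ) = U.det * (star U).det * 1 := by rw [hdet, mul_one]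
    _ ≤ U.det * (star U).det * (1 + D).det := by
        rw [hdet, one_mul, one_mul]
        have : (1 + D) = Matrix.diagonal (fun i => 1 + hB.1.eigenvalues i) := by
          rw [hD]
          rw [← Matrix.diagonal_one, Matrix.diagonal_add]
          rfl
        rw [this, Matrix.det_diagonal]
        calc (1:ℝ) = ∏ _i : Fin k, 1 := by simp
          _ ≤ ∏ i : Fin k, (1 + hB.1.eigenvalues i) := by
              apply Finset.prod_le_prod
              · intro i _; norm_num
              · intro i _; have := hB.eigenvalues_nonneg i; linarith
    _ = U.det * (1 + D).det * (star U).det := by ring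

private lemma det_le_det_add_psd {k : ℕ} {A S : Matrix (Fin k) (Fin k) ℝ}
    (hA : A.PosDef) (hS : S.PosSemidef) : A.det ≤ (A + S).det := by
  set T := CFC.sqrt A with hTdef
  have hTpsd : T.PosSemidef := Matrix.nonneg_iff_posSemidef.mp (CFC.sqrt_nonneg A)
  have hTT : T * T = A := CFC.sqrt_mul_sqrt_self A hA.posSemidef.nonneg
  have hdetA : 0 < A.det := hA.det_pos
  have hdetT : T.det ≠ 0 := by
    intro h
    rw [← hTT, Matrix.det_mul, h, mul_zero] at hdetA
    exact lt_irrefl 0 hdetA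
  have hTinv : T * T⁻¹ = 1 := Matrix.mul_nonsing_inv T (isUnit_iff_ne_zero.mpr hdetT)
  have hTinv' : T⁻¹ * T = 1 := Matrix.nonsing_inv_mul T (isUnit_iff_ne_zero.mpr hdetT)
  set M := T⁻¹ * S * T⁻¹ with hMdef
  have hMpsd : M.PosSemidef := by
    have := hS.conjTranspose_mul_mul_same T⁻¹
    rwa [hTpsd.inv.1.eq] at this
  have key : A + S = T * (1 + M) * T := by
    rw [Matrix.mul_add, Matrix.add_mul, Matrix.mul_one, hTT, hMdef]
    congr 1
    symm
    calc T * (T⁻¹ * S * T⁻¹) * T = (T * T⁻¹) * S * (T⁻¹ * T) := by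
          simp only [Matrix.mul_assoc]
      _ = S := by rw [hTinv, hTinv', Matrix.one_mul, Matrix.mul_one]
  rw [key, Matrix.det_mul, Matrix.det_mul]
  have hdetTT : T.det * T.det = A.det := by rw [← Matrix.det_mul, hTT]
  calc A.det = T.det * T.det * 1 := by rw [hdetTT, mul_one]
    _ ≤ T.det * T.det * (1 + M).det := by
        apply mul_le_mul_of_nonneg_left (one_le_det_one_add_psd hMpsd)
        rw [hdetTT]; exact le_of_lt hdetA
    _ = T.det * (1 + M).det * T.det := by ring

/-- The function `X ↦ log det (I_N + (Y - HX)ᵀ C⁻¹ (Y - HX))` attains its global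
minimum at the weighted least-squares estimate `X̂ = (Hᵀ C⁻¹ H)⁻¹ Hᵀ C⁻¹ Y`,
when `H` has full column rank and `C` is symmetric positive definite. -/
theorem stmt_5 {m n N : ℕ} (Y : Matrix (Fin m) (Fin N) ℝ)
    (H : Matrix (Fin m) (Fin n) ℝ) (hH : H.rank = n)
    (C : Matrix (Fin m) (Fin m) ℝ) (hC : C.PosDef) :
    ∀ X : Matrix (Fin n) (Fin N) ℝ,
      Real.log (1 + (Y - H * ((Hᵀ * C⁻¹ * H)⁻¹ * (Hᵀ * C⁻¹ * Y)))ᵀ * C⁻¹ *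
          (Y - H * ((Hᵀ * C⁻¹ * H)⁻¹ * (Hᵀ * C⁻¹ * Y)))).det ≤
        Real.log (1 + (Y - H * X)ᵀ * C⁻¹ * (Y - H * X)).det := by
  intro X
  have hCinv : (C⁻¹).PosDef := hC.inv
  have hCinvT : (C⁻¹)ᵀ = C⁻¹ := by
    have := hCinv.1
    rwa [Matrix.IsHermitian, Matrix.conjTranspose_eq_transpose_of_trivial] at this
  -- H has trivial kernel
  have hker : ∀ x : Fin n → ℝ, H *ᵥ x = 0 → x = 0 := by
    have h1 := LinearMap.finrank_range_add_finrank_ker H.mulVecLin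
    rw [show Module.finrank ℝ (LinearMap.range H.mulVecLin) = H.rank from rfl, hH] at h1
    simp only [Module.finrank_pi, Fintype.card_fin] at h1
    have hk0 : Module.finrank ℝ (LinearMap.ker H.mulVecLin) = 0 := by omega
    intro x hx
    have : x ∈ LinearMap.ker H.mulVecLin := by
      simpa [LinearMap.mem_ker, Matrix.mulVecLin_apply] using hx
    rw [Submodule.finrank_eq_zero.mp hk0] at this
    simpa using this
  -- Hᵀ C⁻¹ H is positive definite, hence invertible
  set G := Hᵀ * C⁻¹ * H with hGdef
  have hG : G.PosDef := by
    refine Matrix.PosDef.of_dotProduct_mulVec_pos ?_ ?_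
    · have := Matrix.isHermitian_conjTranspose_mul_mul H hCinv.1
      rwa [Matrix.conjTranspose_eq_transpose_of_trivial] at this
    · intro x hx
      have hHx : H *ᵥ x ≠ 0 := fun h => hx (hker x h)
      have : (star x) ⬝ᵥ (G *ᵥ x) = star (H *ᵥ x) ⬝ᵥ (C⁻¹ *ᵥ (H *ᵥ x)) := by
        simp only [hGdef, ← Matrix.mulVec_mulVec, Matrix.dotProduct_mulVec,
          star_trivial, Matrix.vecMul_transpose]
      rw [this]
      exact hCinv.dotProduct_mulVec_pos hHx
  have hGunit : G * G⁻¹ = 1 :=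
    Matrix.mul_nonsing_inv G (isUnit_iff_ne_zero.mpr hG.det_pos.ne')
  set Xh := G⁻¹ * (Hᵀ * C⁻¹ * Y) with hXh
  set R0 := Y - H * Xh with hR0
  have horth : Hᵀ * C⁻¹ * R0 = 0 := by
    have h2 : Hᵀ * C⁻¹ * (H * Xh) = (G * G⁻¹) * (Hᵀ * C⁻¹ * Y) := by
      simp only [hGdef, hXh, Matrix.mul_assoc]
    rw [hR0, Matrix.mul_sub, h2, hGunit, Matrix.one_mul, sub_self]
  set E := H * Xh - H * X with hE
  have hYX : Y - H * X = R0 + E := by rw [hR0, hE]; abel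
  have hEort : Eᵀ * (C⁻¹ * R0) = 0 := by
    have hET : Eᵀ = (Xh - X)ᵀ * Hᵀ := by
      rw [hE, ← Matrix.mul_sub, Matrix.transpose_mul]
    rw [hET, Matrix.mul_assoc, ← Matrix.mul_assoc Hᵀ, horth, Matrix.mul_zero]
  have hEort' : R0ᵀ * (C⁻¹ * E) = 0 := by
    have : R0ᵀ * (C⁻¹ * E) = (Eᵀ * (C⁻¹ * R0))ᵀ := by
      rw [Matrix.transpose_mul, Matrix.transpose_mul, Matrix.transpose_transpose,
        hCinvT, Matrix.mul_assoc]
    rw [this, hEort, Matrix.transpose_zero]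
  have hdecomp : (Y - H * X)ᵀ * C⁻¹ * (Y - H * X)
      = R0ᵀ * C⁻¹ * R0 + Eᵀ * C⁻¹ * E := by
    rw [hYX, Matrix.transpose_add, Matrix.add_mul, Matrix.add_mul, Matrix.mul_add,
      Matrix.mul_add]
    rw [Matrix.mul_assoc R0ᵀ, Matrix.mul_assoc Eᵀ, Matrix.mul_assoc R0ᵀ, Matrix.mul_assoc Eᵀ,
      hEort, hEort']
    rw [← Matrix.mul_assoc, ← Matrix.mul_assoc]
    abel
  have hA0psd : (R0ᵀ * C⁻¹ * R0).PosSemidef := by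
    have := hCinv.posSemidef.conjTranspose_mul_mul_same R0
    rwa [Matrix.conjTranspose_eq_transpose_of_trivial] at this
  have hSpsd : (Eᵀ * C⁻¹ * E).PosSemidef := by
    have := hCinv.posSemidef.conjTranspose_mul_mul_same E
    rwa [Matrix.conjTranspose_eq_transpose_of_trivial] at this
  have hone : (1 + R0ᵀ * C⁻¹ * R0).PosDef := Matrix.PosDef.one.add_posSemidef hA0psd
  have hdet : (1 + R0ᵀ * C⁻¹ * R0).det ≤ (1 + (Y - H * X)ᵀ * C⁻¹ * (Y - H * X)).det := by
    rw [hdecomp, ← add_assoc]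
    exact det_le_det_add_psd hone hSpsd
  exact Real.log_le_log hone.det_pos hdet
end

section
/- Fixed-point characterization: X* is a stationary point of V(X) = (γ_w/2) ln det(I_N + (Y-HX)ᵀ C_w⁻¹ (Y-HX)) + (γ_x/2) ln det(I_N + (X-U)ᵀ C_x⁻¹ (X-U)) if and only if X* = (Hᵀ R̂(X*)⁻¹ H + P̂(X*)⁻¹)⁻¹ (Hᵀ R̂(X*)⁻¹ Y + P̂(X*)⁻¹ U), where P̂(X) = (1/γ_x)(C_x + (X-U)(X-U)ᵀ) and R̂(X) = (1/γ_w)(C_w + (Y-HX)(Y-HX)ᵀ). -/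
open Matrix Finset


lemma hasDerivAt_det_path {N : ℕ} (A B : Matrix (Fin N) (Fin N) ℝ)
    (M : ℝ → Matrix (Fin N) (Fin N) ℝ) (hM0 : M 0 = A)
    (h : ∀ i j, HasDerivAt (fun s => M s i j) (B i j) 0) :
    HasDerivAt (fun s => (M s).det) ((adjugate A * B).trace) 0 := by
  have key : ∀ σ : Equiv.Perm (Fin N),
      HasDerivAt (fun s => (Equiv.Perm.sign σ : ℝ) * ∏ i, M s (σ i) i)
        ((Equiv.Perm.sign σ : ℝ) * ∑ i, (∏ j ∈ univ.erase i, A (σ j) j) * B (σ i) i) 0 := by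
    intro σ
    have h1 := HasDerivAt.finset_prod (u := univ) (f := fun i s => M s (σ i) i)
      (f' := fun i => B (σ i) i) (x := 0) (fun i _ => h (σ i) i)
    have h2 := h1.const_mul ((Equiv.Perm.sign σ : ℝ))
    simpa [hM0, smul_eq_mul] using h2
  have main := HasDerivAt.sum (u := univ) (fun σ _ => key σ)
  have main2 : HasDerivAt (fun s => (M s).det)
      (∑ σ : Equiv.Perm (Fin N), (Equiv.Perm.sign σ : ℝ) *
        ∑ i, (∏ j ∈ univ.erase i, A (σ j) j) * B (σ i) i) 0 := by
    refine main.congr_of_eventuallyEq ?_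
    filter_upwards with s
    rw [det_apply', Finset.sum_apply]
  convert main2 using 1
  simp_rw [Finset.mul_sum]
  rw [Finset.sum_comm]
  rw [Matrix.trace]
  refine Finset.sum_congr rfl (fun i _ => ?_)
  have hdet : (A.updateCol i (fun k => B k i)).det
      = ∑ σ : Equiv.Perm (Fin N), (Equiv.Perm.sign σ : ℝ) *
          ((∏ j ∈ univ.erase i, A (σ j) j) * B (σ i) i) := by
    rw [det_apply']
    refine Finset.sum_congr rfl (fun σ _ => ?_)
    rw [← Finset.mul_prod_erase univ _ (Finset.mem_univ i)]
    rw [updateCol_self]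
    have : ∏ j ∈ univ.erase i, A.updateCol i (fun k => B k i) (σ j) j
        = ∏ j ∈ univ.erase i, A (σ j) j := by
      refine Finset.prod_congr rfl (fun j hj => ?_)
      rw [updateCol_ne (Finset.ne_of_mem_erase hj)]
    rw [this]; ring
  rw [← hdet]
  have := congrFun (cramer_eq_adjugate_mulVec A (fun k => B k i)) i
  rw [cramer_apply] at this
  rw [this]
  simp [Matrix.mulVec, dotProduct, Matrix.mul_apply, Matrix.diag_apply]

lemma hasDerivAt_logdet_quad {N : ℕ} (A B C2 : Matrix (Fin N) (Fin N) ℝ) (hA : 0 < A.det) :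
    HasDerivAt (fun s : ℝ => Real.log (A + s • B + (s*s) • C2).det) ((A⁻¹ * B).trace) 0 := by
  have hdet : HasDerivAt (fun s : ℝ => (A + s • B + (s*s) • C2).det)
      ((adjugate A * B).trace) 0 := by
    refine hasDerivAt_det_path A B _ (by simp) (fun i j => ?_)
    have h1 : HasDerivAt (fun s : ℝ => s * B i j) (B i j) 0 := by
      simpa using (hasDerivAt_id (0:ℝ)).mul_const (B i j)
    have h2 : HasDerivAt (fun s : ℝ => s * s * C2 i j) 0 0 := by
      simpa using ((hasDerivAt_id (0:ℝ)).mul (hasDerivAt_id 0)).mul_const (C2 i j)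
    have h3 := ((hasDerivAt_const (0:ℝ) (A i j)).add h1).add h2
    have h4 := h3.congr_deriv (by simp : (0:ℝ) + B i j + 0 = B i j)
    refine h4.congr_of_eventuallyEq ?_
    filter_upwards with s
    simp [Matrix.add_apply, Matrix.smul_apply, smul_eq_mul, add_assoc]
  have hadj : adjugate A = A.det • A⁻¹ := by
    rw [Matrix.inv_def, smul_smul, Ring.inverse_eq_inv, mul_inv_cancel₀ hA.ne', one_smul]
  have hne : (A + (0:ℝ) • B + ((0:ℝ)*0) • C2).det ≠ 0 := by simpa using hA.ne'
  have := hdet.log hne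
  have hval : (adjugate A * B).trace / (A + (0:ℝ) • B + ((0:ℝ)*0) • C2).det
      = (A⁻¹ * B).trace := by
    simp only [zero_smul, mul_zero, add_zero]
    rw [hadj, Matrix.smul_mul, trace_smul, smul_eq_mul]
    field_simp
  rwa [hval] at this
lemma posDef_smul' {n : ℕ} {A : Matrix (Fin n) (Fin n) ℝ} (hA : A.PosDef) {c : ℝ} (hc : 0 < c) :
    (c • A).PosDef := by
  refine ⟨?_, fun x hx => ?_⟩
  · have := hA.1
    unfold Matrix.IsHermitian at *
    rw [conjTranspose_smul, this]
    simp
  · exact (hA.smul hc).2 hx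

lemma quad_expand {m N : ℕ} (E G : Matrix (Fin m) (Fin N) ℝ) (W : Matrix (Fin m) (Fin m) ℝ) (s : ℝ) :
    (1 : Matrix (Fin N) (Fin N) ℝ) + (E + s • G)ᵀ * W * (E + s • G)
      = (1 + Eᵀ * W * E) + s • (Gᵀ * W * E + Eᵀ * W * G) + (s*s) • (Gᵀ * W * G) := by
  simp only [transpose_add, transpose_smul, Matrix.add_mul, Matrix.mul_add,
    Matrix.smul_mul, Matrix.mul_smul, smul_smul, smul_add]
  abel

lemma posdef_one_add {m N : ℕ} (E : Matrix (Fin m) (Fin N) ℝ) (W : Matrix (Fin m) (Fin m) ℝ)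
    (hW : W.PosDef) : ((1 : Matrix (Fin N) (Fin N) ℝ) + Eᵀ * W * E).PosDef := by
  have h1 : ((Eᵀ) * W * (Eᵀ)ᴴ).PosSemidef := hW.posSemidef.mul_mul_conjTranspose_same Eᵀ
  rw [conjTranspose_eq_transpose_of_trivial, transpose_transpose] at h1
  exact Matrix.PosDef.add_posSemidef Matrix.PosDef.one h1

lemma hasDerivAt_term {m N : ℕ} (E G : Matrix (Fin m) (Fin N) ℝ) (W : Matrix (Fin m) (Fin m) ℝ)
    (hW : W.PosDef) (γ : ℝ) :
    HasDerivAt (fun s : ℝ => γ/2 * Real.log ((1 : Matrix (Fin N) (Fin N) ℝ) + (E + s•G)ᵀ * W * (E + s•G)).det)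
      (γ/2 * (((1 + Eᵀ*W*E)⁻¹ : Matrix (Fin N) (Fin N) ℝ) * (Gᵀ*W*E + Eᵀ*W*G)).trace) 0 := by
  have hA := posdef_one_add E W hW
  have h := (hasDerivAt_logdet_quad (1 + Eᵀ*W*E) (Gᵀ*W*E + Eᵀ*W*G) (Gᵀ*W*G)
      hA.det_pos).const_mul (γ/2)
  refine h.congr_of_eventuallyEq ?_
  filter_upwards with s
  rw [quad_expand]
lemma trace_KtF {n N : ℕ} (Ai : Matrix (Fin N) (Fin N) ℝ) (F : Matrix (Fin n) (Fin N) ℝ)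
    (i : Fin n) (t : Fin N) :
    (Ai * ((single i t (1:ℝ))ᵀ * F)).trace = (F * Ai) i t := by
  rw [← Matrix.mul_assoc, Matrix.trace_mul_cycle]
  simp [Matrix.trace, Matrix.diag, Matrix.mul_apply, Matrix.single,
    Matrix.transpose_apply, ite_and, Finset.sum_ite_eq, Finset.sum_ite_eq']

lemma trace_FtK {n N : ℕ} (Ai : Matrix (Fin N) (Fin N) ℝ) (F : Matrix (Fin n) (Fin N) ℝ)
    (i : Fin n) (t : Fin N) :
    (Ai * (Fᵀ * single i t (1:ℝ))).trace = (Ai * Fᵀ) t i := by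
  rw [← Matrix.mul_assoc]
  simp [Matrix.trace, Matrix.diag, Matrix.mul_apply, Matrix.single,
    Matrix.transpose_apply, ite_and, Finset.sum_ite_eq, Finset.sum_ite_eq']

lemma trace_sym {n N : ℕ} (Ai : Matrix (Fin N) (Fin N) ℝ) (hAi : Aiᵀ = Ai)
    (F : Matrix (Fin n) (Fin N) ℝ) (i : Fin n) (t : Fin N) :
    (Ai * ((single i t (1:ℝ))ᵀ * F + Fᵀ * single i t (1:ℝ))).trace
      = 2 * (F * Ai) i t := by
  rw [Matrix.mul_add, Matrix.trace_add, trace_KtF, trace_FtK]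
  have h : (Ai * Fᵀ) = (F * Ai)ᵀ := by rw [transpose_mul, hAi]
  rw [h, Matrix.transpose_apply]; ring
lemma hasDerivAt_term' {m n N : ℕ} (E : Matrix (Fin m) (Fin N) ℝ) (W : Matrix (Fin m) (Fin m) ℝ)
    (hW : W.PosDef) (hWs : Wᵀ = W) (γ : ℝ) (P : Matrix (Fin m) (Fin n) ℝ) (i : Fin n) (t : Fin N) :
    HasDerivAt (fun s : ℝ => γ/2 * Real.log ((1:Matrix (Fin N) (Fin N) ℝ)
        + (E + s•(P * single i t (1:ℝ)))ᵀ * W * (E + s•(P * single i t (1:ℝ)))).det)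
      ((γ • ((Pᵀ*W*E) * ((1:Matrix (Fin N) (Fin N) ℝ) + Eᵀ*W*E)⁻¹)) i t) 0 := by
  have h := hasDerivAt_term E (P * single i t (1:ℝ)) W hW γ
  have hAsymm : ((1:Matrix (Fin N) (Fin N) ℝ) + Eᵀ*W*E)ᵀ = 1 + Eᵀ*W*E := by
    simp [transpose_mul, hWs, Matrix.mul_assoc]
  have hAinv : (((1:Matrix (Fin N) (Fin N) ℝ) + Eᵀ*W*E)⁻¹)ᵀ
      = ((1:Matrix (Fin N) (Fin N) ℝ) + Eᵀ*W*E)⁻¹ := by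
    rw [Matrix.transpose_nonsing_inv, hAsymm]
  have e1 : (P * single i t (1:ℝ))ᵀ * W * E
      = (single i t (1:ℝ))ᵀ * (Pᵀ*W*E) := by
    rw [transpose_mul]; simp only [Matrix.mul_assoc]
  have e2 : Eᵀ * W * (P * single i t (1:ℝ))
      = (Pᵀ*W*E)ᵀ * single i t (1:ℝ) := by
    simp only [transpose_mul, transpose_transpose, hWs]
    simp only [Matrix.mul_assoc]
  rw [e1, e2, trace_sym _ hAinv] at h
  have hval : γ/2 * (2 * ((Pᵀ*W*E) * ((1:Matrix (Fin N) (Fin N) ℝ) + Eᵀ*W*E)⁻¹) i t)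
      = (γ • ((Pᵀ*W*E) * ((1:Matrix (Fin N) (Fin N) ℝ) + Eᵀ*W*E)⁻¹)) i t := by
    simp [smul_eq_mul]; ring
  rwa [hval] at h
lemma posdef_add_sq {n N : ℕ} (C : Matrix (Fin n) (Fin n) ℝ) (hC : C.PosDef)
    (D : Matrix (Fin n) (Fin N) ℝ) : (C + D * Dᵀ).PosDef := by
  have h := Matrix.posSemidef_self_mul_conjTranspose D
  rw [conjTranspose_eq_transpose_of_trivial] at h
  exact hC.add_posSemidef h

lemma push_inv {n N : ℕ} (C : Matrix (Fin n) (Fin n) ℝ) (hC : C.PosDef)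
    (D : Matrix (Fin n) (Fin N) ℝ) :
    (C + D * Dᵀ)⁻¹ * D
      = C⁻¹ * D * ((1 : Matrix (Fin N) (Fin N) ℝ) + Dᵀ * C⁻¹ * D)⁻¹ := by
  set T := (1 : Matrix (Fin N) (Fin N) ℝ) + Dᵀ * C⁻¹ * D with hTdef
  have hT : T.PosDef := posdef_one_add D C⁻¹ hC.inv
  have hS : (C + D * Dᵀ).PosDef := posdef_add_sq C hC D
  have key : (C + D * Dᵀ) * (C⁻¹ * D * T⁻¹) = D := by
    have e : (C + D * Dᵀ) * (C⁻¹ * D * T⁻¹)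
        = C * (C⁻¹ * (D * T⁻¹)) + D * ((Dᵀ * (C⁻¹ * D)) * T⁻¹) := by
      simp only [Matrix.add_mul, Matrix.mul_assoc]
    rw [e, Matrix.mul_nonsing_inv_cancel_left _ _ hC.det_pos.ne'.isUnit]
    have e2 : D * T⁻¹ + D * ((Dᵀ * (C⁻¹ * D)) * T⁻¹) = D * (T * T⁻¹) := by
      rw [hTdef]
      simp only [Matrix.add_mul, Matrix.mul_add, Matrix.one_mul, Matrix.mul_assoc]
    rw [e2, Matrix.mul_nonsing_inv _ hT.det_pos.ne'.isUnit, Matrix.mul_one]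
  calc (C + D * Dᵀ)⁻¹ * D
      = (C + D * Dᵀ)⁻¹ * ((C + D * Dᵀ) * (C⁻¹ * D * T⁻¹)) := by rw [key]
    _ = C⁻¹ * D * T⁻¹ := Matrix.nonsing_inv_mul_cancel_left _ _ hS.det_pos.ne'.isUnit

lemma inv_smul_inv {n : ℕ} (c : ℝ) (hc : 0 < c) (A : Matrix (Fin n) (Fin n) ℝ)
    (hA : IsUnit A.det) : (c⁻¹ • A)⁻¹ = c • A⁻¹ := by
  haveI : Invertible (c⁻¹) := invertibleOfNonzero (inv_ne_zero hc.ne')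
  have h1 := Matrix.inv_smul (A := A) c⁻¹ hA
  rw [h1, invOf_eq_inv, inv_inv]
/-- Fixed-point characterization: `X*` is a stationary point of the concentrated
cost `V` iff it satisfies the CMAP fixed-point equation
`X* = (Hᵀ R̂(X*)⁻¹ H + P̂(X*)⁻¹)⁻¹ (Hᵀ R̂(X*)⁻¹ Y + P̂(X*)⁻¹ U)`, where
`P̂(X) = (1/γ_x)(C_x + (X-U)(X-U)ᵀ)` and `R̂(X) = (1/γ_w)(C_w + (Y-HX)(Y-HX)ᵀ)`. -/
theorem stmt_16 {m n N : ℕ} (Y : Matrix (Fin m) (Fin N) ℝ)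
    (H : Matrix (Fin m) (Fin n) ℝ) (hH : H.rank = n)
    (U : Matrix (Fin n) (Fin N) ℝ)
    (Cx : Matrix (Fin n) (Fin n) ℝ) (hCx : Cx.PosDef)
    (Cw : Matrix (Fin m) (Fin m) ℝ) (hCw : Cw.PosDef)
    (γx γw : ℝ) (hγx : 0 < γx) (hγw : 0 < γw)
    (Xs : Matrix (Fin n) (Fin N) ℝ) :
    (∀ (i : Fin n) (t : Fin N),
      HasDerivAt
        (fun s : ℝ =>
          γw / 2 *
            Real.log (1 + (Y - H * (Xs + s • Matrix.single i t (1 : ℝ)))ᵀ * Cw⁻¹ *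
              (Y - H * (Xs + s • Matrix.single i t (1 : ℝ)))).det +
          γx / 2 *
            Real.log (1 + ((Xs + s • Matrix.single i t (1 : ℝ)) - U)ᵀ * Cx⁻¹ *
              ((Xs + s • Matrix.single i t (1 : ℝ)) - U)).det)
        0 0) ↔
    Xs = (Hᵀ * (γw⁻¹ • (Cw + (Y - H * Xs) * (Y - H * Xs)ᵀ))⁻¹ * H +
            (γx⁻¹ • (Cx + (Xs - U) * (Xs - U)ᵀ))⁻¹)⁻¹ *
          (Hᵀ * (γw⁻¹ • (Cw + (Y - H * Xs) * (Y - H * Xs)ᵀ))⁻¹ * Y +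
            (γx⁻¹ • (Cx + (Xs - U) * (Xs - U)ᵀ))⁻¹ * U) := by
  have hWw : (Cw⁻¹).PosDef := hCw.inv
  have hWx : (Cx⁻¹).PosDef := hCx.inv
  have hWws : (Cw⁻¹)ᵀ = Cw⁻¹ := by
    have h := hWw.isHermitian
    rwa [Matrix.IsHermitian, conjTranspose_eq_transpose_of_trivial] at h
  have hWxs : (Cx⁻¹)ᵀ = Cx⁻¹ := by
    have h := hWx.isHermitian
    rwa [Matrix.IsHermitian, conjTranspose_eq_transpose_of_trivial] at h
  set E : Matrix (Fin m) (Fin N) ℝ := Y - H * Xs with hEdef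
  set D : Matrix (Fin n) (Fin N) ℝ := Xs - U with hDdef
  set Aw : Matrix (Fin N) (Fin N) ℝ := (1 : Matrix (Fin N) (Fin N) ℝ) + Eᵀ * Cw⁻¹ * E with hAwdef
  set Ax : Matrix (Fin N) (Fin N) ℝ := (1 : Matrix (Fin N) (Fin N) ℝ) + Dᵀ * Cx⁻¹ * D with hAxdef
  set Gtot : Matrix (Fin n) (Fin N) ℝ :=
    γx • (Cx⁻¹ * D * Ax⁻¹) - γw • (Hᵀ * Cw⁻¹ * E * Aw⁻¹) with hGdef
  -- the derivative of the cost at each entry direction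
  have key : ∀ (i : Fin n) (t : Fin N),
      HasDerivAt
        (fun s : ℝ =>
          γw / 2 *
            Real.log (1 + (Y - H * (Xs + s • Matrix.single i t (1 : ℝ)))ᵀ * Cw⁻¹ *
              (Y - H * (Xs + s • Matrix.single i t (1 : ℝ)))).det +
          γx / 2 *
            Real.log (1 + ((Xs + s • Matrix.single i t (1 : ℝ)) - U)ᵀ * Cx⁻¹ *
              ((Xs + s • Matrix.single i t (1 : ℝ)) - U)).det)
        (Gtot i t) 0 := by
    intro i t
    have hw := hasDerivAt_term' E Cw⁻¹ hWw hWws γw (-H) i t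
    have hx := hasDerivAt_term' D Cx⁻¹ hWx hWxs γx (1 : Matrix (Fin n) (Fin n) ℝ) i t
    have hsum := hw.add hx
    have e_w : ∀ s : ℝ, Y - H * (Xs + s • Matrix.single i t (1 : ℝ))
        = E + s • ((-H) * Matrix.single i t (1 : ℝ)) := by
      intro s
      rw [hEdef, Matrix.mul_add, Matrix.mul_smul, Matrix.neg_mul, smul_neg]
      abel
    have e_x : ∀ s : ℝ, (Xs + s • Matrix.single i t (1 : ℝ)) - U
        = D + s • ((1 : Matrix (Fin n) (Fin n) ℝ) * Matrix.single i t (1 : ℝ)) := by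
      intro s
      rw [hDdef, Matrix.one_mul]
      abel
    have hval : (γw • (((-H)ᵀ * Cw⁻¹ * E) * Aw⁻¹)) i t
        + (γx • (((1 : Matrix (Fin n) (Fin n) ℝ)ᵀ * Cx⁻¹ * D) * Ax⁻¹)) i t = Gtot i t := by
      rw [hGdef]
      simp only [Matrix.transpose_neg, Matrix.neg_mul, Matrix.transpose_one, Matrix.one_mul,
        Matrix.sub_apply, Matrix.smul_apply, Matrix.neg_apply, smul_eq_mul]
      ring
    rw [hval] at hsum
    refine hsum.congr_of_eventuallyEq ?_
    filter_upwards with s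
    rw [e_w s, e_x s, Pi.add_apply]
  -- positive definiteness facts
  have hSw : (Cw + E * Eᵀ).PosDef := posdef_add_sq Cw hCw E
  have hSx : (Cx + D * Dᵀ).PosDef := posdef_add_sq Cx hCx D
  have hRinv : ((γw⁻¹ • (Cw + E * Eᵀ))⁻¹).PosDef := (posDef_smul' hSw (inv_pos.mpr hγw)).inv
  have hPinv : ((γx⁻¹ • (Cx + D * Dᵀ))⁻¹).PosDef := (posDef_smul' hSx (inv_pos.mpr hγx)).inv
  have hRw : (γw⁻¹ • (Cw + E * Eᵀ))⁻¹ = γw • (Cw + E * Eᵀ)⁻¹ :=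
    inv_smul_inv γw hγw _ hSw.det_pos.ne'.isUnit
  have hPx : (γx⁻¹ • (Cx + D * Dᵀ))⁻¹ = γx • (Cx + D * Dᵀ)⁻¹ :=
    inv_smul_inv γx hγx _ hSx.det_pos.ne'.isUnit
  -- identities
  have hPD : (γx⁻¹ • (Cx + D * Dᵀ))⁻¹ * D = γx • (Cx⁻¹ * D * Ax⁻¹) := by
    rw [hPx, Matrix.smul_mul, push_inv Cx hCx D, hAxdef]
  have hRW : Hᵀ * (γw⁻¹ • (Cw + E * Eᵀ))⁻¹ * E = γw • (Hᵀ * Cw⁻¹ * E * Aw⁻¹) := by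
    rw [hRw, Matrix.mul_smul, Matrix.smul_mul, Matrix.mul_assoc, push_inv Cw hCw E, hAwdef]
    simp only [Matrix.mul_assoc]
  -- step 1 : stationarity iff Gtot = 0
  have step1 : (∀ (i : Fin n) (t : Fin N),
      HasDerivAt
        (fun s : ℝ =>
          γw / 2 *
            Real.log (1 + (Y - H * (Xs + s • Matrix.single i t (1 : ℝ)))ᵀ * Cw⁻¹ *
              (Y - H * (Xs + s • Matrix.single i t (1 : ℝ)))).det +
          γx / 2 *
            Real.log (1 + ((Xs + s • Matrix.single i t (1 : ℝ)) - U)ᵀ * Cx⁻¹ *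
              ((Xs + s • Matrix.single i t (1 : ℝ)) - U)).det)
        0 0) ↔ Gtot = 0 := by
    constructor
    · intro h
      ext i t
      have := (h i t).unique (key i t)
      simp [← this]
    · intro h i t
      have hk := key i t
      rw [h] at hk
      simpa using hk
  -- step 2 : Gtot = 0 iff normal equation
  have step2 : Gtot = 0 ↔
      (γx⁻¹ • (Cx + D * Dᵀ))⁻¹ * D = Hᵀ * (γw⁻¹ • (Cw + E * Eᵀ))⁻¹ * E := by
    rw [hGdef, sub_eq_zero, hPD, hRW]
  -- step 3 : normal equation iff fixed point
  have hSemi : (Hᵀ * (γw⁻¹ • (Cw + E * Eᵀ))⁻¹ * H).PosSemidef := by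
    have h := hRinv.posSemidef.mul_mul_conjTranspose_same Hᵀ
    rwa [conjTranspose_eq_transpose_of_trivial, transpose_transpose] at h
  have hS : (Hᵀ * (γw⁻¹ • (Cw + E * Eᵀ))⁻¹ * H + (γx⁻¹ • (Cx + D * Dᵀ))⁻¹).PosDef :=
    Matrix.PosDef.posSemidef_add hSemi hPinv
  have hSdet : IsUnit (Hᵀ * (γw⁻¹ • (Cw + E * Eᵀ))⁻¹ * H + (γx⁻¹ • (Cx + D * Dᵀ))⁻¹).det :=
    hS.det_pos.ne'.isUnit
  have diff : (γx⁻¹ • (Cx + D * Dᵀ))⁻¹ * D - Hᵀ * (γw⁻¹ • (Cw + E * Eᵀ))⁻¹ * E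
      = (Hᵀ * (γw⁻¹ • (Cw + E * Eᵀ))⁻¹ * H + (γx⁻¹ • (Cx + D * Dᵀ))⁻¹) * Xs
        - (Hᵀ * (γw⁻¹ • (Cw + E * Eᵀ))⁻¹ * Y + (γx⁻¹ • (Cx + D * Dᵀ))⁻¹ * U) := by
    rw [hEdef, hDdef]
    simp only [Matrix.mul_sub, Matrix.sub_mul, Matrix.add_mul, Matrix.mul_assoc]
    abel
  have step3 : ((γx⁻¹ • (Cx + D * Dᵀ))⁻¹ * D = Hᵀ * (γw⁻¹ • (Cw + E * Eᵀ))⁻¹ * E) ↔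
      Xs = (Hᵀ * (γw⁻¹ • (Cw + E * Eᵀ))⁻¹ * H + (γx⁻¹ • (Cx + D * Dᵀ))⁻¹)⁻¹ *
        (Hᵀ * (γw⁻¹ • (Cw + E * Eᵀ))⁻¹ * Y + (γx⁻¹ • (Cx + D * Dᵀ))⁻¹ * U) := by
    rw [← sub_eq_zero, diff, sub_eq_zero]
    constructor
    · intro h
      rw [← h, Matrix.nonsing_inv_mul_cancel_left _ _ hSdet]
    · intro h
      conv_lhs => rw [h]
      rw [Matrix.mul_nonsing_inv_cancel_left _ _ hSdet]
  exact step1.trans (step2.trans step3)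
end

section
/- Positive definiteness of the variational covariance parameter: if C_x is n×n symmetric positive definite, P̃ is n×n symmetric positive semidefinite, N ≥ 1, and Ũ, U are n×N real matrices, then C̃_x = C_x + N P̃ + N Ũ Ũᵀ - Ũ Uᵀ - U Ũᵀ + U Uᵀ is symmetric positive definite, provided N ≥ 1. -/
open Matrix

lemma psd_smul_aux {m : Type*} [Fintype m] {M : Matrix m m ℝ} (hM : M.PosSemidef)
    {c : ℝ} (hc : 0 ≤ c) : (c • M).PosSemidef := by
  refine ⟨by unfold Matrix.IsHermitian; rw [conjTranspose_smul, hM.1]; simp, fun x => ?_⟩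
  simpa [Finsupp.mul_sum, mul_assoc, mul_left_comm] using mul_nonneg hc (hM.2 x)

/-- Positive definiteness of the variational covariance parameter:
`C̃_x = C_x + N P̃ + N Ũ Ũᵀ - Ũ Uᵀ - U Ũᵀ + U Uᵀ` is symmetric positive definite
when `C_x` is positive definite, `P̃` is positive semidefinite and `N ≥ 1`. -/
theorem stmt_18 {n N : ℕ} (hN : 1 ≤ N)
    (Cx : Matrix (Fin n) (Fin n) ℝ) (hCx : Cx.PosDef)
    (Ptil : Matrix (Fin n) (Fin n) ℝ) (hPtil : Ptil.PosSemidef)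
    (Util U : Matrix (Fin n) (Fin N) ℝ) :
    (Cx + (N : ℝ) • Ptil + (N : ℝ) • (Util * Utilᵀ) - Util * Uᵀ - U * Utilᵀ +
      U * Uᵀ).PosDef := by
  have hNpos : (0:ℝ) < N := by exact_mod_cast Nat.lt_of_lt_of_le Nat.zero_lt_one hN
  set c : ℝ := Real.sqrt N with hcdef
  have hc : c * c = (N:ℝ) := Real.mul_self_sqrt hNpos.le
  have hcpos : 0 < c := Real.sqrt_pos.mpr hNpos
  set A := c • Util - c⁻¹ • U with hAdef
  have hA : A * Aᵀ = (N:ℝ) • (Util * Utilᵀ) - Util * Uᵀ - U * Utilᵀ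
      + (N:ℝ)⁻¹ • (U * Uᵀ) := by
    rw [hAdef, ← hc]
    simp only [transpose_sub, transpose_smul, Matrix.sub_mul, Matrix.mul_sub,
      Matrix.smul_mul, Matrix.mul_smul, smul_smul]
    match_scalars <;> field_simp
  have key : Cx + (N : ℝ) • Ptil + (N : ℝ) • (Util * Utilᵀ) - Util * Uᵀ - U * Utilᵀ +
      U * Uᵀ = (Cx + (N : ℝ) • Ptil) + (A * Aᵀ + (1 - (N:ℝ)⁻¹) • (U * Uᵀ)) := by
    rw [hA]
    module
  rw [key]
  have hAAt : (A * Aᵀ).PosSemidef := by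
    have := Matrix.posSemidef_self_mul_conjTranspose A
    rwa [conjTranspose_eq_transpose_of_trivial] at this
  have hUUt : ((1 - (N:ℝ)⁻¹) • (U * Uᵀ)).PosSemidef := by
    apply psd_smul_aux
    · have := Matrix.posSemidef_self_mul_conjTranspose U
      rwa [conjTranspose_eq_transpose_of_trivial] at this
    · have : (N:ℝ)⁻¹ ≤ 1 := by
        rw [inv_le_one_iff₀]; right; exact_mod_cast hN
      linarith
  exact (hCx.add_posSemidef (psd_smul_aux hPtil hNpos.le)).add_posSemidef (hAAt.add hUUt)
end
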